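/- For functions g_i(x) = (−x)^{-a_i} w_i(1/x) with w_i analytic at 0 and w_i(0)=1, the n×n Wronskian minor G_i of (g_0,...,ĝ_i,...,g_n) has leading behavior at x = ∞: G_i(x) = ∏_{0≤j<k≤n, j,k≠i}(a_k−a_j) · (−x)^{a_i − Σ_{m=0}^n a_m − n(n-1)/2} · u(1/x), with u analytic at 0 and u(0)=1. -/

import Mathlib

open Complex Finset


noncomputable def auxV (α : ℂ) (w : ℂ → ℂ) : ℕ → ℂ → ℂ
  | 0 => w
  | r + 1 => fun y => (α + r) * auxV α w r y + y * deriv (auxV α w r) y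

lemma auxV_analyticOnNhd {w : ℂ → ℂ} {s : Set ℂ} (hs : IsOpen s)
    (hw : AnalyticOnNhd ℂ w s) (α : ℂ) (r : ℕ) :
    AnalyticOnNhd ℂ (auxV α w r) s := by
  induction r with
  | zero => exact hw
  | succ r ih =>
    have hd := ih.deriv_of_isOpen hs
    intro y hy
    exact (analyticAt_const.mul (ih y hy)).add (analyticAt_id.mul (hd y hy))

lemma auxV_zero (α : ℂ) (w : ℂ → ℂ) (r : ℕ) :
    auxV α w r 0 = (∏ t ∈ Finset.range r, (α + t)) * w 0 := by
  induction r with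
  | zero => simp [auxV]
  | succ r ih =>
    simp only [auxV, ih, Finset.prod_range_succ]
    ring

lemma sum_fin_cast (n : ℕ) : ∑ r : Fin n, ((r : ℕ) : ℂ) = (n : ℂ) * ((n : ℂ) - 1) / 2 := by
  induction n with
  | zero => simp
  | succ n ih =>
    rw [Fin.sum_univ_castSucc]
    simp only [Fin.coe_castSucc, Fin.val_last]
    rw [ih]
    push_cast
    ring

lemma cpow_sum_helper {x : ℂ} (hx : x ≠ 0) {ι : Type*} (s : Finset ι) (f : ι → ℂ) :
    x ^ (∑ j ∈ s, f j) = ∏ j ∈ s, x ^ f j := by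
  classical
  induction s using Finset.induction with
  | empty => simp
  | insert _ _ h ih => rw [Finset.sum_insert h, Finset.prod_insert h, Complex.cpow_add _ _ hx, ih]

lemma iteratedDeriv_cpow_mul {w : ℂ → ℂ} {ε : ℝ} (hε : 0 < ε)
    (hw : AnalyticOnNhd ℂ w (Metric.ball 0 ε)) (α : ℂ) (r : ℕ) :
    ∀ x : ℂ, ε⁻¹ < ‖x‖ → -x ∈ Complex.slitPlane →
      iteratedDeriv r (fun x : ℂ => (-x) ^ (-α) * w (1 / x)) x
        = (-x) ^ (-α - r) * auxV α w r (1 / x) := by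
  induction r with
  | zero =>
    intro x hx hsl
    simp [auxV]
  | succ r ih =>
    intro x hx hsl
    have hxpos : (0 : ℝ) < ‖x‖ := lt_trans (inv_pos.mpr hε) hx
    have hx0 : x ≠ 0 := by
      intro h; rw [h] at hxpos; simp at hxpos
    have hnx0 : -x ≠ 0 := neg_ne_zero.mpr hx0
    have hmem : x⁻¹ ∈ Metric.ball (0 : ℂ) ε := by
      simp only [Metric.mem_ball, dist_zero_right, norm_inv]
      have h1 : 1 < ε * ‖x‖ := by
        calc (1 : ℝ) = ε * ε⁻¹ := (mul_inv_cancel₀ hε.ne').symm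
          _ < ε * ‖x‖ := by exact (mul_lt_mul_iff_right₀ hε).mpr hx
      nlinarith [mul_inv_cancel₀ hxpos.ne']
    have hva : AnalyticAt ℂ (auxV α w r) x⁻¹ :=
      auxV_analyticOnNhd Metric.isOpen_ball hw α r _ hmem
    rw [iteratedDeriv_succ]
    have heq : iteratedDeriv r (fun x : ℂ => (-x) ^ (-α) * w (1 / x))
        =ᶠ[nhds x] fun y : ℂ => (-y) ^ (-α - r) * auxV α w r (1 / y) := by
      have hopen : IsOpen {y : ℂ | ε⁻¹ < ‖y‖ ∧ -y ∈ Complex.slitPlane} :=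
        (isOpen_lt continuous_const continuous_norm).inter
          (Complex.isOpen_slitPlane.preimage continuous_neg)
      filter_upwards [hopen.mem_nhds ⟨hx, hsl⟩] with y hy
      exact ih y hy.1 hy.2
    rw [heq.deriv_eq]
    have h1 : HasDerivAt (fun y : ℂ => (-y) ^ (-α - r))
        ((-α - r) * (-x) ^ (-α - r - 1) * (-1)) x :=
      (hasDerivAt_neg x).cpow_const hsl
    have h2 : HasDerivAt (fun y : ℂ => auxV α w r (1 / y))
        (deriv (auxV α w r) (1 / x) * (-(x ^ 2)⁻¹)) x := by
      have hv : HasDerivAt (auxV α w r) (deriv (auxV α w r) x⁻¹) x⁻¹ :=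
        hva.differentiableAt.hasDerivAt
      have := hv.comp x (hasDerivAt_inv hx0)
      simpa [one_div, Function.comp_def] using this
    have hd : deriv (fun y : ℂ => (-y) ^ (-α - r) * auxV α w r (1 / y)) x
        = ((-α - r) * (-x) ^ (-α - r - 1) * (-1)) * auxV α w r (1 / x)
          + (-x) ^ (-α - r) * (deriv (auxV α w r) (1 / x) * (-(x ^ 2)⁻¹)) :=
      (h1.mul h2).deriv
    rw [hd]
    have e1 : (-x) ^ (-α - (r : ℂ)) = (-x) ^ (-α - (r : ℂ) - 1) * (-x) := by
      conv_lhs => rw [show -α - (r : ℂ) = (-α - (r : ℂ) - 1) + 1 by ring]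
      rw [Complex.cpow_add _ _ hnx0, Complex.cpow_one]
    have e2 : (-x) ^ (-α - ((r + 1 : ℕ) : ℂ)) = (-x) ^ (-α - (r : ℂ) - 1) := by
      congr 1
      push_cast
      ring
    rw [e1, e2]
    simp only [auxV]
    field_simp
    ring

/-- For g_i(x) = (−x)^{-a_i} w_i(1/x) with w_i analytic at 0 and
w_i(0) = 1, and a₀,…,aₙ pairwise non-congruent mod ℤ, the n×n Wronskian minor G_i of
(g₀,…,ĝ_i,…,gₙ) has leading behavior at x = ∞:
G_i(x) = ∏_{0≤j<k≤n, j,k≠i}(a_k − a_j) · (−x)^{a_i − Σ_{m=0}^n a_m − n(n-1)/2} · u(1/x),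
with u analytic at 0 and u(0) = 1. -/
theorem wronskian_minor_leading_behavior_at_infinity (n : ℕ) (a : Fin (n + 1) → ℂ)
    (ha : ∀ j k, j ≠ k → ∀ z : ℤ, a j - a k ≠ (z : ℂ))
    (w : Fin (n + 1) → ℂ → ℂ) (hw : ∀ i, AnalyticAt ℂ (w i) 0)
    (hw1 : ∀ i, w i 0 = 1)
    (g : Fin (n + 1) → ℂ → ℂ)
    (hg : ∀ i, ∀ x : ℂ, g i x = (-x) ^ (-(a i)) * w i (1 / x))
    (i : Fin (n + 1)) :
    ∃ u : ℂ → ℂ, AnalyticAt ℂ u 0 ∧ u 0 = 1 ∧ ∃ R > (0 : ℝ), ∀ x : ℂ,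
      R < ‖x‖ → (0 < (-x).re ∨ (-x).im ≠ 0) →
      Matrix.det (Matrix.of fun r c : Fin n =>
          iteratedDeriv (r : ℕ) (g (i.succAbove c)) x) =
        (∏ j : Fin n, ∏ k ∈ Finset.Ioi j, (a (i.succAbove k) - a (i.succAbove j))) *
          (-x) ^ (a i - (∑ m : Fin (n + 1), a m) - (n : ℂ) * ((n : ℂ) - 1) / 2) *
          u (1 / x) := by
  classical
  -- a common radius of analyticity
  have h1 : ∀ m : Fin (n + 1), ∃ ε > (0 : ℝ), AnalyticOnNhd ℂ (w m) (Metric.ball 0 ε) := by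
    intro m
    have h := (hw m).eventually_analyticAt
    rw [Metric.eventually_nhds_iff_ball] at h
    obtain ⟨ε, hε, h⟩ := h
    exact ⟨ε, hε, fun y hy => h y hy⟩
  choose ε hεpos hεan using h1
  set ε0 : ℝ := Finset.univ.inf' Finset.univ_nonempty ε with hε0def
  have hε0pos : 0 < ε0 := by
    rw [hε0def, Finset.lt_inf'_iff]
    exact fun m _ => hεpos m
  have hε0le : ∀ m, ε0 ≤ ε m := fun m => Finset.inf'_le _ (Finset.mem_univ m)
  have hwan : ∀ m, AnalyticOnNhd ℂ (w m) (Metric.ball 0 ε0) :=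
    fun m => (hεan m).mono (Metric.ball_subset_ball (hε0le m))
  set b : Fin n → ℂ := fun c => a (i.succAbove c) with hbdef
  set C : ℂ := ∏ j : Fin n, ∏ k ∈ Finset.Ioi j, (b k - b j) with hCdef
  have hCne : C ≠ 0 := by
    rw [hCdef]
    rw [Finset.prod_ne_zero_iff]
    intro j _
    rw [Finset.prod_ne_zero_iff]
    intro k hk
    have hjk : j ≠ k := (Finset.mem_Ioi.mp hk).ne
    have hne : i.succAbove k ≠ i.succAbove j := by
      intro h
      exact hjk (Fin.succAbove_right_injective h).symm
    have := ha (i.succAbove k) (i.succAbove j) hne 0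
    simpa [sub_eq_zero] using this
  have hVan : ∀ (r : ℕ) (c : Fin n),
      AnalyticOnNhd ℂ (auxV (b c) (w (i.succAbove c)) r) (Metric.ball 0 ε0) :=
    fun r c => auxV_analyticOnNhd Metric.isOpen_ball (hwan _) _ _
  have h0mem : (0 : ℂ) ∈ Metric.ball (0 : ℂ) ε0 := Metric.mem_ball_self hε0pos
  -- the polynomials
  set p : Fin n → Polynomial ℂ :=
    fun r => ∏ t ∈ Finset.range r, (Polynomial.X + Polynomial.C (t : ℂ)) with hpdef
  have hmonic : ∀ r, (p r).Monic := fun r =>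
    Polynomial.monic_prod_of_monic _ _ fun t _ => Polynomial.monic_X_add_C _
  have hdeg : ∀ r : Fin n, (p r).natDegree = r := by
    intro r
    show (∏ t ∈ Finset.range (r : ℕ), (Polynomial.X + Polynomial.C (t : ℂ))).natDegree = (r : ℕ)
    rw [Polynomial.natDegree_prod _ _ (fun (t : ℕ) _ => (Polynomial.monic_X_add_C ((t : ℂ))).ne_zero)]
    rw [Finset.sum_congr rfl (fun (t : ℕ) _ => Polynomial.natDegree_X_add_C ((t : ℂ)))]
    simp
  have hdet0 : Matrix.det (Matrix.of fun r c : Fin n =>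
      auxV (b c) (w (i.succAbove c)) (r : ℕ) 0) = C := by
    have hentry : (Matrix.of fun r c : Fin n => auxV (b c) (w (i.succAbove c)) (r : ℕ) 0)
        = Matrix.transpose (Matrix.of fun r c : Fin n => (p c).eval (b r)) := by
      ext r c
      simp only [Matrix.of_apply, Matrix.transpose_apply]
      rw [auxV_zero, hw1, mul_one]
      simp [hpdef, Polynomial.eval_prod]
    rw [hentry, Matrix.det_transpose,
      ← Matrix.det_eval_matrixOfPolynomials_eq_det_vandermonde b p hdeg hmonic,
      Matrix.det_vandermonde]
  refine ⟨fun y => C⁻¹ * Matrix.det (Matrix.of fun r c : Fin n =>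
      auxV (b c) (w (i.succAbove c)) (r : ℕ) y), ?_, ?_, max 1 ε0⁻¹,
      lt_of_lt_of_le one_pos (le_max_left _ _), ?_⟩
  · apply analyticAt_const.mul
    have hrw : (fun y => Matrix.det (Matrix.of fun r c : Fin n =>
        auxV (b c) (w (i.succAbove c)) (r : ℕ) y))
        = fun y => ∑ σ : Equiv.Perm (Fin n), (Equiv.Perm.sign σ : ℂ) *
            ∏ c : Fin n, auxV (b c) (w (i.succAbove c)) ((σ c : Fin n) : ℕ) y := by
      funext y
      rw [Matrix.det_apply']
      rfl
    rw [hrw]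
    apply Finset.analyticAt_fun_sum
    intro σ _
    apply analyticAt_const.mul
    apply Finset.analyticAt_fun_prod
    intro c _
    exact hVan _ c 0 h0mem
  · beta_reduce
    rw [hdet0, inv_mul_cancel₀ hCne]
  · intro x hx hslit
    have hx1 : (1 : ℝ) < ‖x‖ := lt_of_le_of_lt (le_max_left _ _) hx
    have hxε : ε0⁻¹ < ‖x‖ := lt_of_le_of_lt (le_max_right _ _) hx
    have hx0 : x ≠ 0 := by
      intro h; rw [h] at hx1; norm_num at hx1
    have hnx0 : -x ≠ 0 := neg_ne_zero.mpr hx0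
    have hslit' : -x ∈ Complex.slitPlane := hslit
    have hM : ∀ r c : Fin n, iteratedDeriv (r : ℕ) (g (i.succAbove c)) x
        = (-x) ^ (-(b c)) * ((-x) ^ (-((r : ℕ) : ℂ)) *
            auxV (b c) (w (i.succAbove c)) (r : ℕ) (1 / x)) := by
      intro r c
      have hgfun : g (i.succAbove c) =
          fun x => (-x) ^ (-(b c)) * w (i.succAbove c) (1 / x) := funext (hg _)
      rw [hgfun, iteratedDeriv_cpow_mul hε0pos (hwan _) (b c) (r : ℕ) x hxε hslit',
        show (-(b c) - ((r : ℕ) : ℂ)) = -(b c) + -((r : ℕ) : ℂ) by ring,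
        Complex.cpow_add _ _ hnx0, mul_assoc]
    have hMat : (Matrix.of fun r c : Fin n => iteratedDeriv (r : ℕ) (g (i.succAbove c)) x)
        = Matrix.of (fun r c : Fin n => (-x) ^ (-(b c)) *
            (Matrix.of (fun r c : Fin n => (-x) ^ (-((r : ℕ) : ℂ)) *
              (Matrix.of fun r c : Fin n =>
                auxV (b c) (w (i.succAbove c)) (r : ℕ) (1 / x)) r c)) r c) := by
      ext r c
      simpa using hM r c
    rw [hMat, Matrix.det_mul_row, Matrix.det_mul_column]
    have hp1 : (∏ c : Fin n, (-x) ^ (-(b c))) = (-x) ^ (-(∑ c : Fin n, b c)) := by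
      rw [← cpow_sum_helper hnx0, Finset.sum_neg_distrib]
    have hp2 : (∏ r : Fin n, (-x) ^ (-((r : ℕ) : ℂ)))
        = (-x) ^ (-((n : ℂ) * ((n : ℂ) - 1) / 2)) := by
      rw [← cpow_sum_helper hnx0, Finset.sum_neg_distrib, sum_fin_cast]
    rw [hp1, hp2]
    have hE : (-x) ^ (a i - (∑ m : Fin (n + 1), a m) - (n : ℂ) * ((n : ℂ) - 1) / 2)
        = (-x) ^ (-(∑ c : Fin n, b c)) * (-x) ^ (-((n : ℂ) * ((n : ℂ) - 1) / 2)) := by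
      rw [← Complex.cpow_add _ _ hnx0]
      congr 1
      have hsum : (∑ m : Fin (n + 1), a m) = a i + ∑ c : Fin n, b c :=
        Fin.sum_univ_succAbove a i
      rw [hsum]
      ring
    rw [hE]
    field_simp
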